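/- Let R be a commutative ring of characteristic 0 with fraction field K, and let p be a prime such that a^p ≡ a (mod pR) for all a ∈ R (for example R = ℤ or R = ℤ_p). Let φ(x) ∈ x^p + p·x^{p+1}R[[x]] be a formal power series of the indicated form. Then the Böttcher coordinate satisfies f_φ(x) ∈ R[[x]] and its compositional inverse satisfies f_φ^{-1}(x) ∈ R[[x]]. -/

import Mathlib

open PowerSeries Finset

namespace BottcherAux


variable {A : Type*} [CommRing A]

/-- If `X^e ∣ E` then `X^e` divides `(F+E)^k - F^k`. -/
lemma dvd_add_pow_sub (F E : PowerSeries A) (k e : ℕ) (hE : (X : A⟦X⟧) ^ e ∣ E) :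
    (X : A⟦X⟧) ^ e ∣ ((F + E) ^ k - F ^ k) := by
  rw [add_pow, Finset.sum_range_succ]
  simp only [Nat.sub_self, pow_zero, mul_one, Nat.choose_self, Nat.cast_one,
    add_sub_cancel_right]
  refine Finset.dvd_sum fun j hj => ?_
  rw [Finset.mem_range] at hj
  exact Dvd.dvd.mul_right (Dvd.dvd.mul_left (hE.trans (dvd_pow_self E (by omega))) _) _

/-- With `X ∣ F` and `X^e ∣ E`, `X^(e+k-1)` divides `(F+E)^k - F^k`. -/
lemma dvd_add_pow_sub' (F E : PowerSeries A) (k e : ℕ) (he : 1 ≤ e)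
    (hF : (X : A⟦X⟧) ∣ F) (hE : (X : A⟦X⟧) ^ e ∣ E) :
    (X : A⟦X⟧) ^ (e + k - 1) ∣ ((F + E) ^ k - F ^ k) := by
  rw [add_pow, Finset.sum_range_succ]
  simp only [Nat.sub_self, pow_zero, mul_one, Nat.choose_self, Nat.cast_one,
    add_sub_cancel_right]
  refine Finset.dvd_sum fun j hj => ?_
  rw [Finset.mem_range] at hj
  have h1 : (X : A⟦X⟧) ^ j ∣ F ^ j := pow_dvd_pow_of_dvd hF j
  have h2 : (X : A⟦X⟧) ^ (e * (k - j)) ∣ E ^ (k - j) := by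
    rw [pow_mul]; exact pow_dvd_pow_of_dvd hE _
  have h3 : (X : A⟦X⟧) ^ (j + e * (k - j)) ∣ F ^ j * E ^ (k - j) := by
    rw [pow_add]; exact mul_dvd_mul h1 h2
  refine dvd_trans (dvd_trans (pow_dvd_pow _ ?_) h3) (Dvd.dvd.mul_right dvd_rfl _)
  obtain ⟨m', hm'⟩ : ∃ m', k - j = m' + 1 := ⟨k - 1 - j, by omega⟩
  have h4 : m' ≤ e * m' := Nat.le_mul_of_pos_left _ he
  have h5 : e * (k - j) = e * m' + e := by rw [hm']; ring
  omega

/-- With `X ∣ F` and `X^e ∣ E`, subtracting also the linear term in `E` gives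
divisibility by `X^(2e+k-2)`. -/
lemma dvd_add_pow_sub'' (F E : PowerSeries A) (k e : ℕ) (hk : 1 ≤ k) (he : 1 ≤ e)
    (hF : (X : A⟦X⟧) ∣ F) (hE : (X : A⟦X⟧) ^ e ∣ E) :
    (X : A⟦X⟧) ^ (2 * e + k - 2) ∣
      ((F + E) ^ k - F ^ k - F ^ (k - 1) * E * (k : A⟦X⟧)) := by
  obtain ⟨k', rfl⟩ : ∃ k', k = k' + 1 := ⟨k - 1, by omega⟩
  rw [add_pow, Finset.sum_range_succ, Finset.sum_range_succ]
  simp only [Nat.sub_self, pow_zero, mul_one, Nat.choose_self, Nat.cast_one,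
    Nat.add_sub_cancel, Nat.choose_succ_self_right, pow_one, Nat.add_sub_cancel_left]
  have hident : ∀ S T U : A⟦X⟧, S + T + U - U - T = S := fun S T U => by ring
  rw [hident]
  refine Finset.dvd_sum fun j hj => ?_
  rw [Finset.mem_range] at hj
  have h1 : (X : A⟦X⟧) ^ j ∣ F ^ j := pow_dvd_pow_of_dvd hF j
  have h2 : (X : A⟦X⟧) ^ (e * (k' + 1 - j)) ∣ E ^ (k' + 1 - j) := by
    rw [pow_mul]; exact pow_dvd_pow_of_dvd hE _
  have h3 : (X : A⟦X⟧) ^ (j + e * (k' + 1 - j)) ∣ F ^ j * E ^ (k' + 1 - j) :=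
    by rw [pow_add]; exact mul_dvd_mul h1 h2
  refine dvd_trans (dvd_trans (pow_dvd_pow _ ?_) h3) (Dvd.dvd.mul_right dvd_rfl _)
  obtain ⟨m', hm'⟩ : ∃ m', k' + 1 - j = m' + 2 := ⟨k' - 1 - j, by omega⟩
  have h4 : m' ≤ e * m' := Nat.le_mul_of_pos_left _ he
  have h5 : e * (k' + 1 - j) = e * m' + 2 * e := by rw [hm']; ring
  omega

/-- `coeff k (F^k) = (coeff 1 F)^k` for `F` with zero constant coefficient. -/
lemma coeff_pow_self (F : PowerSeries A) (h0 : constantCoeff (R := A) F = 0) (k : ℕ) :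
    coeff (R := A) k (F ^ k) = (coeff (R := A) 1 F) ^ k := by
  obtain ⟨h, rfl⟩ := X_dvd_iff.mpr h0
  have e1 : coeff (R := A) 1 (X * h) = constantCoeff (R := A) h := by
    have := coeff_X_pow_mul h 1 0
    rw [zero_add, pow_one, coeff_zero_eq_constantCoeff] at this
    exact this
  rw [mul_pow, e1]
  have := coeff_X_pow_mul (h ^ k) k 0
  rw [zero_add] at this
  rw [this, coeff_zero_eq_constantCoeff, map_pow]




variable {K : Type*} [CommRing K]

lemma coeff_pow_mem (S' : Subring K) (F : PowerSeries K)
    (hF : ∀ m, coeff (R := K) m F ∈ S') (k : ℕ) : ∀ m, coeff (R := K) m (F ^ k) ∈ S' := by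
  induction k with
  | zero =>
    intro m
    rw [pow_zero, coeff_one]
    split <;> simp [Subring.one_mem, Subring.zero_mem]
  | succ k ih =>
    intro m
    rw [pow_succ, coeff_mul]
    exact _root_.sum_mem fun x _ => S'.mul_mem (ih _) (hF _)

/-- `coeff N (F^k)` lies in a subring if all the relevant low coefficients do. -/
lemma coeff_pow_mem_of_low (S' : Subring K) (F : PowerSeries K) (N k : ℕ)
    (hk : 1 ≤ k) (h0 : coeff (R := K) 0 F = 0)
    (hm : ∀ m, m + k ≤ N + 1 → coeff (R := K) m F ∈ S') :
    coeff (R := K) N (F ^ k) ∈ S' := by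
  by_cases hkN : k ≤ N + 1
  · set d := N + 2 - k with hd
    set T : PowerSeries K := PowerSeries.mk fun m => if m < d then coeff (R := K) m F else 0 with hT
    have hTc : ∀ m, coeff (R := K) m T = if m < d then coeff (R := K) m F else 0 := fun m => coeff_mk m _
    have hE : (X : K⟦X⟧) ^ d ∣ (F - T) := by
      rw [X_pow_dvd_iff]
      intro m hmd
      rw [map_sub, hTc, if_pos hmd, sub_self]
    have hXT : (X : K⟦X⟧) ∣ T := by
      rw [X_dvd_iff, ← coeff_zero_eq_constantCoeff, hTc]
      split
      · exact h0
      · rfl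
    have hdvd := dvd_add_pow_sub' T (F - T) k d (by omega) hXT hE
    have hcoeff : coeff (R := K) N ((T + (F - T)) ^ k - T ^ k) = 0 := by
      rw [X_pow_dvd_iff] at hdvd
      exact hdvd N (by omega)
    rw [show T + (F - T) = F by ring, map_sub, sub_eq_zero] at hcoeff
    rw [hcoeff]
    refine coeff_pow_mem S' T (fun m => ?_) k N
    rw [hTc]
    split
    · exact hm m (by omega)
    · exact S'.zero_mem
  · have : coeff (R := K) N (F ^ k) = 0 := by
      have h1 : (X : K⟦X⟧) ^ k ∣ F ^ k :=
        pow_dvd_pow_of_dvd (X_dvd_iff.mpr (by rw [← coeff_zero_eq_constantCoeff]; exact h0)) k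
      rw [X_pow_dvd_iff] at h1
      exact h1 N (by omega)
    rw [this]; exact S'.zero_mem



/-- In a ring where `p = 0` (`p` prime), the coefficients of `p`-th powers of
power series are given by the Frobenius. -/
lemma coeff_pow_char {S : Type*} [CommRing S] (p : ℕ) (hp : p.Prime)
    (hpS : (p : S) = 0) (G : PowerSeries S) (N : ℕ) :
    coeff (R := S) N (G ^ p) = if p ∣ N then (coeff (R := S) (N / p) G) ^ p else 0 := by
  rcases subsingleton_or_nontrivial S with h | h
  · exact Subsingleton.elim _ _
  · have hchar : CharP S p := by
      have h1 : ringChar S ∣ p := ringChar.dvd hpS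
      rcases (Nat.Prime.eq_one_or_self_of_dvd hp _ h1) with h2 | h2
      · exfalso
        have : ((1 : ℕ) : S) = 0 := ringChar.spec S 1 |>.mpr (h2 ▸ dvd_refl _)
        simp at this
      · exact ringChar.of_eq h2
    haveI := Fact.mk hp
    haveI : ExpChar S p := ExpChar.prime hp
    set q := trunc (N + 1) G with hq
    have hE : (X : S⟦X⟧) ^ (N + 1) ∣ (G - ↑q) := by
      rw [X_pow_dvd_iff]
      intro m hm
      rw [map_sub, Polynomial.coeff_coe, coeff_trunc, if_pos hm, sub_self]
    have h1 : coeff (R := S) N (G ^ p) = coeff (R := S) N ((q : S⟦X⟧) ^ p) := by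
      have hd := dvd_add_pow_sub (q : S⟦X⟧) (G - (q : S⟦X⟧)) p (N + 1) hE
      have hGq : (q : S⟦X⟧) + (G - (q : S⟦X⟧)) = G := by ring
      rw [hGq, X_pow_dvd_iff] at hd
      have := hd N (by omega)
      rw [map_sub, sub_eq_zero] at this
      exact this
    rw [h1, ← Polynomial.coe_pow, Polynomial.coeff_coe,
      ← Polynomial.map_frobenius_expand (p := p) q, Polynomial.coeff_map, Polynomial.coeff_expand hp.pos]
    split_ifs with hdvd
    · rw [frobenius_def, hq, coeff_trunc,
        if_pos (Nat.lt_succ_of_le (Nat.div_le_self N p))]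
    · exact map_zero _

/-- mod-`p` Frobenius congruence for coefficients of `p`-th powers over any ring. -/
lemma coeff_pow_prime_mod {R : Type*} [CommRing R] (p : ℕ) (hp : p.Prime)
    (F : PowerSeries R) (N : ℕ) :
    ∃ c : R, coeff (R := R) N (F ^ p) =
      (if p ∣ N then (coeff (R := R) (N / p) F) ^ p else 0) + (p : R) * c := by
  set I := Ideal.span {(p : R)} with hI
  set π := Ideal.Quotient.mk I with hπ
  have hpS : ((p : ℕ) : R ⧸ I) = 0 := by
    rw [← map_natCast π, Ideal.Quotient.eq_zero_iff_mem]
    exact Ideal.mem_span_singleton_self _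
  have key := coeff_pow_char p hp hpS (F.map π) N
  rw [← map_pow, coeff_map, coeff_map, ← map_pow, ← map_zero π, ← apply_ite π] at key
  rw [Ideal.Quotient.eq] at key
  rw [Ideal.mem_span_singleton] at key
  obtain ⟨c, hc⟩ := key
  exact ⟨c, by linear_combination hc⟩

end BottcherAux
/-- Composition `f(g(x))` of formal power series, intended for `g` with zero
constant coefficient. -/
noncomputable def PowerSeries.comp {K : Type*} [CommSemiring K] (f g : PowerSeries K) :
    PowerSeries K :=
  PowerSeries.mk fun n =>
    PowerSeries.coeff (R := K) n
      (∑ k ∈ Finset.range (n + 1), PowerSeries.C (R := K) (PowerSeries.coeff (R := K) k f) * g ^ k)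

open BottcherAux in
/-- If `a^p ≡ a (mod pR)` for all `a ∈ R` and
`φ ∈ x^p + p·x^{p+1}R[[x]]`, then the Böttcher coordinate `f_φ` and its
compositional inverse have all coefficients in `R`. -/
theorem bottcher_integral_prime {R K : Type*} [CommRing R] [CharZero R]
    [Field K] [Algebra R K] [IsFractionRing R K]
    (p : ℕ) (hp : p.Prime)
    (hFermat : ∀ a : R, ∃ c : R, a ^ p = a + (p : R) * c)
    (φ : PowerSeries R) (hφlow : ∀ k < p, PowerSeries.coeff (R := R) k φ = 0)
    (hφlead : PowerSeries.coeff (R := R) p φ = 1)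
    (hφdiv : ∀ k, p < k → ∃ c : R, PowerSeries.coeff (R := R) k φ = (p : R) * c)
    (f : PowerSeries K) (hf0 : PowerSeries.coeff (R := K) 0 f = 0)
    (hf1 : PowerSeries.coeff (R := K) 1 f = 1)
    (hfB : (φ.map (algebraMap R K)).comp f = f.comp (PowerSeries.X ^ p))
    (g : PowerSeries K) (hg0 : PowerSeries.coeff (R := K) 0 g = 0)
    (hg1 : PowerSeries.coeff (R := K) 1 g = 1)
    (hginv : f.comp g = PowerSeries.X) :
    (∀ k, ∃ a : R, PowerSeries.coeff (R := K) k f = algebraMap R K a) ∧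
      (∀ k, ∃ a : R, PowerSeries.coeff (R := K) k g = algebraMap R K a) := by
  classical
  set R' : Subring K := (algebraMap R K).range with hR'def
  have hmem : ∀ x : K, x ∈ R' ↔ ∃ a : R, algebraMap R K a = x := fun x => RingHom.mem_range
  have hinj : Function.Injective (algebraMap R K) := IsFractionRing.injective R K
  have hp2 : 2 ≤ p := hp.two_le
  have hpK : (p : K) ≠ 0 := by
    rw [← map_natCast (algebraMap R K) p]
    intro hcon
    have : (p : R) = 0 := hinj (by rw [hcon, map_zero])
    exact hp.ne_zero (Nat.cast_eq_zero.mp this)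
  -- Part 1: the coefficients of f are integral.
  have hf : ∀ n, PowerSeries.coeff (R := K) n f ∈ R' := by
    intro n
    induction n using Nat.strong_induction_on with
    | _ n ih =>
    rcases Nat.lt_or_ge n 2 with hn | hn2
    · interval_cases n
      · rw [hf0]; exact R'.zero_mem
      · rw [hf1]; exact R'.one_mem
    set N := n + p - 1 with hN
    have hNn : N + 1 = n + p := by omega
    have hpN : p < N := by omega
    have hpn : p + n ≤ p * n := by
      have h1 : 2 * (n - 1) ≤ p * (n - 1) := Nat.mul_le_mul_right _ hp2
      have h2 : p * (n - 1) + p * 1 = p * n := by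
        rw [← Nat.mul_add]; congr 1; omega
      omega
    -- choose integral lifts for the coefficients below n
    have hA : ∀ m, ∃ a : R, (m < n → algebraMap R K a = PowerSeries.coeff (R := K) m f) := by
      intro m
      by_cases h : m < n
      · obtain ⟨a, ha⟩ := (hmem _).mp (ih m h); exact ⟨a, fun _ => ha⟩
      · exact ⟨0, fun hc => absurd hc h⟩
    choose a ha using hA
    set T : PowerSeries R := PowerSeries.mk fun m => if m < n then a m else 0 with hTdef
    set TK : PowerSeries K := T.map (algebraMap R K) with hTKdef
    have hTKc : ∀ m, PowerSeries.coeff (R := K) m TK = if m < n then PowerSeries.coeff (R := K) m f else 0 := by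
      intro m
      rw [hTKdef, PowerSeries.coeff_map, hTdef, PowerSeries.coeff_mk]
      split_ifs with h
      · exact ha m h
      · exact map_zero _
    have hXn : (PowerSeries.X : PowerSeries K) ^ n ∣ (f - TK) := by
      rw [PowerSeries.X_pow_dvd_iff]
      intro m hm
      rw [map_sub, hTKc, if_pos hm, sub_self]
    have hXTK : (PowerSeries.X : PowerSeries K) ∣ TK := by
      rw [PowerSeries.X_dvd_iff, ← PowerSeries.coeff_zero_eq_constantCoeff, hTKc,
        if_pos (by omega)]
      exact hf0
    -- Claim C : coeff N (f^p) = coeff N (TK^p) + p * coeff n f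
    have hC : PowerSeries.coeff (R := K) N (f ^ p)
        = PowerSeries.coeff (R := K) N (TK ^ p) + (p : K) * PowerSeries.coeff (R := K) n f := by
      have hd := dvd_add_pow_sub'' TK (f - TK) p n (by omega) (by omega) hXTK hXn
      rw [show TK + (f - TK) = f by ring, PowerSeries.X_pow_dvd_iff] at hd
      have h0 := hd N (by omega)
      rw [map_sub, map_sub, sub_eq_zero, sub_eq_iff_eq_add'] at h0
      -- h0 : coeff N (f^p) = coeff N (TK^p) + coeff N (TK^(p-1) * (f - TK) * ↑p)
      obtain ⟨t, htt⟩ := hXTK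
      obtain ⟨e, hee⟩ := hXn
      have ht0 : PowerSeries.constantCoeff (R := K) t = 1 := by
        have h2 := PowerSeries.coeff_X_pow_mul t 1 0
        rw [zero_add, pow_one, ← htt, PowerSeries.coeff_zero_eq_constantCoeff] at h2
        rw [← h2, hTKc, if_pos (by omega)]
        exact hf1
      have he0 : PowerSeries.constantCoeff (R := K) e = PowerSeries.coeff (R := K) n f := by
        have h2 := PowerSeries.coeff_X_pow_mul e n 0
        rw [zero_add, ← hee, PowerSeries.coeff_zero_eq_constantCoeff] at h2
        rw [← h2, map_sub, hTKc, if_neg (by omega), sub_zero]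
      have hprod : TK ^ (p - 1) * (f - TK) = PowerSeries.X ^ N * (t ^ (p - 1) * e) := by
        rw [hee, htt, mul_pow, show N = (p - 1) + n by omega, pow_add]
        ring
      have hcp : PowerSeries.coeff (R := K) N (TK ^ (p - 1) * (f - TK)) = PowerSeries.coeff (R := K) n f := by
        have h2 := PowerSeries.coeff_X_pow_mul (t ^ (p - 1) * e) N 0
        rw [zero_add] at h2
        rw [hprod, h2, PowerSeries.coeff_zero_eq_constantCoeff, map_mul, map_pow, ht0, he0,
          one_pow, one_mul]
      rw [h0, ← map_natCast (PowerSeries.C (R := K)) p, PowerSeries.coeff_mul_C, hcp, mul_comm]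
    -- Claim D : coeff N (TK^p) as algebraMap image
    obtain ⟨c₁, hc₁⟩ := coeff_pow_prime_mod p hp T N
    have hTKpow : PowerSeries.coeff (R := K) N (TK ^ p)
        = algebraMap R K (PowerSeries.coeff (R := R) N (T ^ p)) := by
      rw [hTKdef, ← map_pow, PowerSeries.coeff_map]
    -- The functional equation at degree N
    have hEq := congrArg (PowerSeries.coeff (R := K) N) hfB
    rw [PowerSeries.comp, PowerSeries.comp, PowerSeries.coeff_mk, PowerSeries.coeff_mk] at hEq
    have hLrw : PowerSeries.coeff (R := K) N
          (∑ k ∈ Finset.range (N + 1),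
            PowerSeries.C (R := K) (PowerSeries.coeff (R := K) k (φ.map (algebraMap R K))) * f ^ k)
        = ∑ k ∈ Finset.range (N + 1),
            algebraMap R K (PowerSeries.coeff (R := R) k φ) * PowerSeries.coeff (R := K) N (f ^ k) := by
      rw [map_sum]
      exact Finset.sum_congr rfl fun k _ => by
        rw [PowerSeries.coeff_C_mul, PowerSeries.coeff_map]
    have hRrw : PowerSeries.coeff (R := K) N
          (∑ k ∈ Finset.range (N + 1),
            PowerSeries.C (R := K) (PowerSeries.coeff (R := K) k f) * (PowerSeries.X ^ p) ^ k)
        = ∑ k ∈ Finset.range (N + 1),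
            PowerSeries.coeff (R := K) k f * (if N = p * k then 1 else 0) := by
      rw [map_sum]
      exact Finset.sum_congr rfl fun k _ => by
        rw [PowerSeries.coeff_C_mul, ← pow_mul, PowerSeries.coeff_X_pow]
    rw [hLrw, hRrw] at hEq
    have hmemp : p ∈ Finset.range (N + 1) := Finset.mem_range.mpr (by omega)
    rw [← Finset.add_sum_erase _ _ hmemp, hφlead, map_one, one_mul] at hEq
    -- the sum over k ≠ p lies in p·R'
    have hsum2 : (∑ k ∈ (Finset.range (N + 1)).erase p,
          algebraMap R K (PowerSeries.coeff (R := R) k φ) * PowerSeries.coeff (R := K) N (f ^ k))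
        ∈ Submodule.span R {(p : K)} := by
      refine Submodule.sum_mem _ fun k hk => ?_
      rw [Finset.mem_erase, Finset.mem_range] at hk
      obtain ⟨hkp, hkN⟩ := hk
      rcases lt_or_gt_of_ne hkp with h | h
      · rw [hφlow k h, map_zero, zero_mul]; exact Submodule.zero_mem _
      · obtain ⟨c, hc⟩ := hφdiv k h
        have hfk : PowerSeries.coeff (R := K) N (f ^ k) ∈ R' :=
          coeff_pow_mem_of_low R' f N k (by omega) hf0 fun m hm => ih m (by omega)
        obtain ⟨d, hd⟩ := (hmem _).mp hfk
        rw [hc, ← hd, map_mul, map_natCast, Submodule.mem_span_singleton]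
        exact ⟨c * d, by rw [Algebra.smul_def, map_mul]; ring⟩
    -- the difference RHS - coeff N (TK^p) lies in p·R'
    have hbr : (∑ k ∈ Finset.range (N + 1),
          PowerSeries.coeff (R := K) k f * (if N = p * k then 1 else 0))
          - PowerSeries.coeff (R := K) N (TK ^ p) ∈ Submodule.span R {(p : K)} := by
      by_cases hdvd : p ∣ N
      · set m := N / p with hm
        have hmN : p * m = N := Nat.mul_div_cancel' hdvd
        have hmn : m < n := by
          by_contra hcon
          push_neg at hcon
          have : p * n ≤ p * m := Nat.mul_le_mul_left p hcon
          omega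
        have hRHS : (∑ k ∈ Finset.range (N + 1),
            PowerSeries.coeff (R := K) k f * (if N = p * k then 1 else 0))
            = PowerSeries.coeff (R := K) m f := by
          rw [Finset.sum_eq_single m]
          · rw [if_pos hmN.symm, mul_one]
          · intro k _ hkm
            rw [if_neg, mul_zero]
            intro hcon2
            exact hkm (Nat.eq_of_mul_eq_mul_left hp.pos (by omega))
          · intro hcon2
            exact absurd (Finset.mem_range.mpr (by omega)) hcon2
        have hTm : PowerSeries.coeff (R := R) m T = a m := by
          rw [hTdef, PowerSeries.coeff_mk, if_pos hmn]
        obtain ⟨c₂, hc₂⟩ := hFermat (a m)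
        have hfm : PowerSeries.coeff (R := K) m f = algebraMap R K (a m) := (ha m hmn).symm
        rw [hRHS, hTKpow, hc₁, if_pos hdvd, hTm, hc₂, hfm,
          Submodule.mem_span_singleton]
        refine ⟨-(c₂ + c₁), ?_⟩
        rw [Algebra.smul_def, ← map_natCast (algebraMap R K) p, ← map_mul, ← map_sub]
        congr 1
        ring
      · have hRHS : (∑ k ∈ Finset.range (N + 1),
            PowerSeries.coeff (R := K) k f * (if N = p * k then 1 else 0)) = 0 := by
          refine Finset.sum_eq_zero fun k _ => ?_
          rw [if_neg, mul_zero]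
          intro hcon
          exact hdvd ⟨k, hcon⟩
        rw [hRHS, hTKpow, hc₁, if_neg hdvd, zero_add, Submodule.mem_span_singleton]
        refine ⟨-c₁, ?_⟩
        rw [Algebra.smul_def, ← map_natCast (algebraMap R K) p, ← map_mul, zero_sub, ← map_neg]
        congr 1
        ring
    have hkey : (p : K) * PowerSeries.coeff (R := K) n f
        = ((∑ k ∈ Finset.range (N + 1),
            PowerSeries.coeff (R := K) k f * (if N = p * k then 1 else 0))
          - PowerSeries.coeff (R := K) N (TK ^ p))
          - (∑ k ∈ (Finset.range (N + 1)).erase p,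
            algebraMap R K (PowerSeries.coeff (R := R) k φ) * PowerSeries.coeff (R := K) N (f ^ k)) := by
      linear_combination hEq - hC
    have hfin : (p : K) * PowerSeries.coeff (R := K) n f ∈ Submodule.span R {(p : K)} := by
      rw [hkey]; exact Submodule.sub_mem _ hbr hsum2
    rw [Submodule.mem_span_singleton] at hfin
    obtain ⟨r, hr⟩ := hfin
    rw [Algebra.smul_def] at hr
    rw [hmem]
    refine ⟨r, mul_left_cancel₀ hpK ?_⟩
    rw [← hr]; ring
  -- Part 2: the coefficients of g are integral.
  have hg : ∀ n, PowerSeries.coeff (R := K) n g ∈ R' := by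
    intro n
    induction n using Nat.strong_induction_on with
    | _ n ih =>
    rcases Nat.lt_or_ge n 2 with hn | hn2
    · interval_cases n
      · rw [hg0]; exact R'.zero_mem
      · rw [hg1]; exact R'.one_mem
    have hEq := congrArg (PowerSeries.coeff (R := K) n) hginv
    rw [PowerSeries.comp, PowerSeries.coeff_mk, PowerSeries.coeff_X, if_neg (by omega),
      map_sum] at hEq
    rw [Finset.sum_congr rfl (fun k _ => PowerSeries.coeff_C_mul n (g ^ k)
      (PowerSeries.coeff (R := K) k f))] at hEq
    have h1mem : (1 : ℕ) ∈ Finset.range (n + 1) := Finset.mem_range.mpr (by omega)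
    rw [← Finset.add_sum_erase _ _ h1mem, hf1, one_mul, pow_one] at hEq
    have hrest : (∑ k ∈ (Finset.range (n + 1)).erase 1,
        PowerSeries.coeff (R := K) k f * PowerSeries.coeff (R := K) n (g ^ k)) ∈ R' := by
      refine _root_.sum_mem fun k hk => ?_
      rw [Finset.mem_erase, Finset.mem_range] at hk
      obtain ⟨hk1, hkn⟩ := hk
      rcases Nat.eq_zero_or_pos k with rfl | hkpos
      · rw [hf0, zero_mul]; exact R'.zero_mem
      · have hk2 : 2 ≤ k := by omega
        exact R'.mul_mem (hf k)
          (coeff_pow_mem_of_low R' g n k (by omega) hg0 fun m hm => ih m (by omega))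
    have : PowerSeries.coeff (R := K) n g
        = -(∑ k ∈ (Finset.range (n + 1)).erase 1,
            PowerSeries.coeff (R := K) k f * PowerSeries.coeff (R := K) n (g ^ k)) := by
      linear_combination hEq
    rw [this]
    exact R'.neg_mem hrest
  refine ⟨fun k => ?_, fun k => ?_⟩
  · obtain ⟨b, hb⟩ := (hmem _).mp (hf k); exact ⟨b, hb.symm⟩
  · obtain ⟨b, hb⟩ := (hmem _).mp (hg k); exact ⟨b, hb.symm⟩
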